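/- Let (ξ_i)_{i≥1} be i.i.d. random variables with values in ℤ_+ and mean at most 1, and define the downward skip-free random walk S_n = ξ_1 + ... + ξ_n − n and the first passage time T_1 = inf{n ≥ 0 : S_n = −1}. Then for every n ≥ 1, P(T_1 = n) = (1/n) · P(ξ_1 + ... + ξ_n = n − 1). -/

import Mathlib

set_option autoImplicit false

open MeasureTheory ProbabilityTheory Filter Finset
open Fin.NatCast Fin.CommRing



/-- Sum of a periodic function over a window of length `n` is independent of the window start. -/
private lemma dwass_window {n : ℕ} (a : ℕ → ℤ) (hper : ∀ j, a (j + n) = a j) (m : ℕ) :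
    ∑ j ∈ range n, a (m + j) = ∑ j ∈ range n, a j := by
  induction m with
  | zero => simp
  | succ m ih =>
    have h1 : ∑ j ∈ range (n + 1), a (m + j) = (∑ j ∈ range n, a (m + j)) + a (m + n) :=
      Finset.sum_range_succ _ n
    have h2 : ∑ j ∈ range (n + 1), a (m + j)
        = (∑ j ∈ range n, a (m + (j + 1))) + a (m + 0) := Finset.sum_range_succ' _ n
    have h4 : ∀ j ∈ range n, a (m + (j + 1)) = a (m + 1 + j) := by
      intro j _; congr 1; omega
    rw [Finset.sum_congr rfl h4] at h2
    have h3 : a (m + n) = a m := hper m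
    have h5 : a (m + 0) = a m := by norm_num
    have := h1.symm.trans h2
    rw [← ih]
    omega

/-- The cycle lemma: for a periodic skip-free sequence summing to `-1` over a period,
there is a unique rotation whose partial sums stay above `-1`. -/
private lemma dwass_cycle {n : ℕ} (hn : 0 < n) (a : ℕ → ℤ)
    (hper : ∀ j, a (j + n) = a j)
    (hsum : ∑ j ∈ range n, a j = -1) :
    ∃! k, k < n ∧ ∀ m, 0 < m → m < n → -1 < ∑ j ∈ range m, a (k + j) := by
  set S : ℕ → ℤ := fun m => ∑ j ∈ range m, a j with hS
  have hshift : ∀ k m, S (k + m) = S k + ∑ j ∈ range m, a (k + j) := by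
    intro k m
    simpa [hS] using Finset.sum_range_add a k m
  have hSper : ∀ m, S (m + n) = S m - 1 := by
    intro m
    rw [hshift m n, dwass_window a hper m, hsum]; ring
  -- the predicate in the statement, rephrased
  have hiff : ∀ k, k < n →
      ((∀ m, 0 < m → m < n → -1 < ∑ j ∈ range m, a (k + j)) ↔
        ((∀ j < k, S k < S j) ∧ (∀ j, k ≤ j → j < n → S k ≤ S j))) := by
    intro k hk
    have hval : ∀ m, ∑ j ∈ range m, a (k + j) = S (k + m) - S k := by
      intro m; rw [hshift k m]; ring
    constructor
    · intro h
      constructor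
      · intro j hj
        have hm : 0 < n + j - k ∧ n + j - k < n := by omega
        have := h (n + j - k) hm.1 hm.2
        rw [hval] at this
        have hkm : k + (n + j - k) = j + n := by omega
        rw [hkm, hSper j] at this
        omega
      · intro j hkj hjn
        rcases eq_or_lt_of_le hkj with rfl | hlt
        · exact le_refl _
        · have hm : 0 < j - k ∧ j - k < n := by omega
          have := h (j - k) hm.1 hm.2
          rw [hval] at this
          have hkm : k + (j - k) = j := by omega
          rw [hkm] at this
          omega
    · rintro ⟨h1, h2⟩ m hm hmn
      rw [hval]
      by_cases hc : k + m < n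
      · have := h2 (k + m) (by omega) hc
        omega
      · have hj : k + m - n < k := by omega
        have := h1 (k + m - n) hj
        have hkm : k + m = (k + m - n) + n := by omega
        rw [hkm, hSper] at *
        omega
  -- existence of an argmin
  have hex : ∃ k, k < n ∧ ∀ j < n, S k ≤ S j := by
    obtain ⟨k, hk, hmin⟩ := Finset.exists_min_image (range n) S ⟨0, by simpa using hn⟩
    exact ⟨k, by simpa using hk, fun j hj => hmin j (by simpa using hj)⟩
  classical
  set k0 := Nat.find hex with hk0
  obtain ⟨hk0n, hk0min⟩ := Nat.find_spec hex
  have hk0first : ∀ j < k0, ¬(j < n ∧ ∀ i < n, S j ≤ S i) := fun j hj => Nat.find_min hex hj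
  refine ⟨k0, ⟨hk0n, ?_⟩, ?_⟩
  · rw [hiff k0 hk0n]
    refine ⟨?_, fun j _ hj => hk0min j hj⟩
    intro j hj
    rcases lt_or_ge (S k0) (S j) with h | h
    · exact h
    · exfalso
      exact hk0first j hj ⟨by omega, fun i hi => le_trans h (hk0min i hi)⟩
  · intro k ⟨hkn, hkgood⟩
    rw [hiff k hkn] at hkgood
    obtain ⟨hg1, hg2⟩ := hkgood
    -- k satisfies Q and all j < k fail Q, hence k = Nat.find hex
    have hQk : k < n ∧ ∀ j < n, S k ≤ S j := by
      refine ⟨hkn, fun j hj => ?_⟩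
      rcases lt_or_ge j k with h | h
      · exact le_of_lt (hg1 j h)
      · exact hg2 j h hj
    have hnQ : ∀ j < k, ¬(j < n ∧ ∀ i < n, S j ≤ S i) := by
      intro j hj ⟨_, hmin⟩
      have := hmin k hkn
      have := hg1 j hj
      omega
    rw [hk0]
    symm
    rw [Nat.find_eq_iff]
    exact ⟨hQk, hnQ⟩
set_option maxHeartbeats 1000000

private lemma dwass_nohit {n : ℕ} (S : ℕ → ℤ) (h0 : S 0 = 0)
    (hstep : ∀ m, S m - 1 ≤ S (m + 1))
    (hne : ∀ m < n, S m ≠ -1) : ∀ m < n, -1 < S m := by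
  intro m hm
  induction m with
  | zero => simp [h0]
  | succ m ih =>
    have h1 : -1 < S m := ih (by omega)
    have h2 := hstep m
    have h3 := hne (m + 1) hm
    omega

private def dwS (n : ℕ) [NeZero n] (x : Fin n → ℕ) (m : ℕ) : ℤ :=
  (∑ j ∈ Finset.range m, (x (j : Fin n) : ℤ)) - m

private def dwA (n : ℕ) [NeZero n] : Set (Fin n → ℕ) :=
  {x | dwS n x n = -1 ∧ ∀ m < n, dwS n x m ≠ -1}

private lemma dwass_count (n : ℕ) [NeZero n] (w : (Fin n → ℕ) → ENNReal)
    (hwrot : ∀ (k : Fin n) (x : Fin n → ℕ), w (fun i => x (i + k)) = w x)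
    (x : Fin n → ℕ) :
    ({y | dwS n y n = -1} : Set (Fin n → ℕ)).indicator w x
      = ∑ k : Fin n, (dwA n).indicator w (fun i => x (i + k)) := by
  classical
  have hn : 0 < n := Nat.pos_of_ne_zero (NeZero.ne n)
  set a : ℕ → ℤ := fun j => (x (j : Fin n) : ℤ) - 1 with ha
  have hper : ∀ j, a (j + n) = a j := by
    intro j
    simp only [ha]
    congr 2
    push_cast
    simp
  -- partial sums of rotated sequences equal shifted partial sums of `a`
  have hrotS : ∀ (k : Fin n) (m : ℕ),
      dwS n (fun i => x (i + k)) m = ∑ j ∈ range m, a ((k : ℕ) + j) := by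
    intro k m
    simp only [dwS, ha]
    rw [Finset.sum_sub_distrib, Finset.sum_const, Finset.card_range]
    have : ∀ j ∈ range m, (x (((k : ℕ) + j : ℕ) : Fin n) : ℤ) = (x ((j : Fin n) + k) : ℤ) := by
      intro j _
      congr 2
      push_cast [Fin.cast_val_eq_self]
      ring
    rw [Finset.sum_congr rfl this]
    push_cast
    ring
  -- the full-period sum of any rotation equals `dwS n x n`
  have hrotn : ∀ k : Fin n, dwS n (fun i => x (i + k)) n = dwS n x n := by
    intro k
    rw [hrotS k n, dwass_window a hper (k : ℕ)]
    simp only [dwS, ha]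
    rw [Finset.sum_sub_distrib, Finset.sum_const, Finset.card_range]
    push_cast
    ring
  by_cases hxB : dwS n x n = -1
  all_goals have hxB' := hxB
  · -- cycle lemma applies
    have hsum : ∑ j ∈ range n, a j = -1 := by
      have := hrotn 0
      rw [hrotS 0 n] at this
      simpa [hxB] using this
    obtain ⟨k0, ⟨hk0n, hk0T⟩, huniq⟩ := dwass_cycle hn a hper hsum
    set K : Fin n := ⟨k0, hk0n⟩ with hK
    -- membership in dwA for rotations
    have hmem : ∀ k : Fin n, ((fun i => x (i + k)) ∈ dwA n) ↔
        (∀ m, 0 < m → m < n → -1 < ∑ j ∈ range m, a ((k : ℕ) + j)) := by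
      intro k
      have hstep : ∀ m, (∑ j ∈ range m, a ((k : ℕ) + j)) - 1
          ≤ ∑ j ∈ range (m + 1), a ((k : ℕ) + j) := by
        intro m
        rw [Finset.sum_range_succ]
        have h0 : (0 : ℤ) ≤ (x ((((k : ℕ) + m : ℕ)) : Fin n) : ℤ) := Int.natCast_nonneg _
        simp only [ha]
        omega
      simp only [dwA, Set.mem_setOf_eq, hrotS k, dwass_window a hper (k : ℕ), hsum, true_and]
      constructor
      · intro h m hm hmn
        exact dwass_nohit (fun m => ∑ j ∈ range m, a ((k : ℕ) + j)) (by simp) hstep h m hmn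
      · intro h m hmn
        rcases Nat.eq_zero_or_pos m with rfl | hm
        · simp
        · exact ne_of_gt (h m hm hmn)
    have hKmem : (fun i => x (i + K)) ∈ dwA n := (hmem K).mpr hk0T
    have hother : ∀ k : Fin n, k ≠ K → (fun i => x (i + k)) ∉ dwA n := by
      intro k hk hmemk
      have := huniq (k : ℕ) ⟨k.isLt, (hmem k).mp hmemk⟩
      exact hk (Fin.ext this)
    have hxBmem : x ∈ {y : Fin n → ℕ | dwS n y n = -1} := hxB
    rw [Set.indicator_of_mem hxBmem]
    rw [Finset.sum_eq_single_of_mem K (Finset.mem_univ K)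
      (fun k _ hk => Set.indicator_of_notMem (hother k hk) w)]
    rw [Set.indicator_of_mem hKmem, hwrot]
  · have hxBmem : x ∉ {y : Fin n → ℕ | dwS n y n = -1} := hxB
    rw [Set.indicator_of_notMem hxBmem]
    symm
    refine Finset.sum_eq_zero fun k _ => Set.indicator_of_notMem (fun hmemk => ?_) w
    exact hxB ((hrotn k) ▸ hmemk.1)

/-- **Dwass's formula.** If `(ξ i)` are i.i.d. `ℕ`-valued random variables with mean at most `1`,
`S m = ξ 0 + ... + ξ (m-1) - m` and `T = inf {m : S m = -1}`, then for every `n ≥ 1`,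
`P(T = n) = (1/n) ⬝ P(ξ 0 + ... + ξ (n-1) = n - 1)`. -/
theorem dwass_formula
    {Ω : Type*} [MeasureSpace Ω] (P : Measure Ω := volume) [IsProbabilityMeasure P]
    (ξ : ℕ → Ω → ℕ) (hmeas : ∀ i, Measurable (ξ i))
    (hindep : iIndepFun ξ P)
    (hident : ∀ i, IdentDistrib (ξ i) (ξ 0) P P)
    (hint : Integrable (fun ω => (ξ 0 ω : ℝ)) P)
    (hmean : (∫ ω, (ξ 0 ω : ℝ) ∂P) ≤ 1)
    (n : ℕ) (hn : 1 ≤ n) :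
    P {ω | sInf {m : ℕ | (∑ i ∈ Finset.range m, (ξ i ω : ℤ)) - m = -1} = n}
      = (n : ENNReal)⁻¹ * P {ω | (∑ i ∈ Finset.range n, ξ i ω) = n - 1} := by
  classical
  have hn0 : 0 < n := hn
  haveI : NeZero n := ⟨hn0.ne'⟩
  set V : Ω → (Fin n → ℕ) := fun ω i => ξ i ω with hV
  set p : ℕ → ENNReal := fun v => P (ξ 0 ⁻¹' {v}) with hp
  set w : (Fin n → ℕ) → ENNReal := fun x => ∏ i : Fin n, p (x i) with hw
  -- fibers of V
  have hfiber_eq : ∀ x : Fin n → ℕ,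
      {ω | V ω = x} = ⋂ i ∈ Finset.range n, ξ i ⁻¹' ({x (i : Fin n)} : Set ℕ) := by
    intro x
    ext ω
    simp only [Set.mem_setOf_eq, Set.mem_iInter, Set.mem_preimage, Set.mem_singleton_iff,
      Finset.mem_range]
    constructor
    · rintro rfl i hi
      simp only [hV]
      congr 1
      simp [Fin.val_natCast, Nat.mod_eq_of_lt hi]
    · intro h
      funext j
      have := h (j : ℕ) j.isLt
      rw [Fin.cast_val_eq_self] at this
      simpa [hV] using this
  have hfiber_meas : ∀ x : Fin n → ℕ, MeasurableSet {ω | V ω = x} := by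
    intro x
    rw [hfiber_eq x]
    exact MeasurableSet.biInter (Set.to_countable _)
      (fun i _ => hmeas i (measurableSet_singleton _))
  have hfiber : ∀ x : Fin n → ℕ, P {ω | V ω = x} = w x := by
    intro x
    have hms : ∀ i : ℕ, MeasurableSet (if i < n then ({x (i : Fin n)} : Set ℕ) else Set.univ) := by
      intro i
      split
      · exact measurableSet_singleton _
      · exact MeasurableSet.univ
    have hprod := hindep.measure_inter_preimage_eq_mul (Finset.range n)
      (sets := fun i => if i < n then ({x (i : Fin n)} : Set ℕ) else Set.univ)
      (fun i _ => hms i)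
    have hsets : ∀ i ∈ Finset.range n,
        ξ i ⁻¹' (if i < n then ({x (i : Fin n)} : Set ℕ) else Set.univ)
          = ξ i ⁻¹' ({x (i : Fin n)} : Set ℕ) := by
      intro i hi
      rw [if_pos (Finset.mem_range.mp hi)]
    rw [Set.iInter₂_congr hsets] at hprod
    rw [hfiber_eq x, hprod]
    have hterm : ∀ i ∈ Finset.range n,
        P (ξ i ⁻¹' (if i < n then ({x (i : Fin n)} : Set ℕ) else Set.univ)) = p (x (i : Fin n)) := by
      intro i hi
      rw [if_pos (Finset.mem_range.mp hi)]
      exact (hident i).measure_mem_eq (measurableSet_singleton _)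
    rw [Finset.prod_congr rfl hterm, hw,
      ← Fin.prod_univ_eq_prod_range (fun i => p (x (i : Fin n))) n]
    exact Finset.prod_congr rfl fun i _ => by rw [Fin.cast_val_eq_self]
  -- measure of V-preimages as tsums
  have hPset : ∀ s : Set (Fin n → ℕ),
      P {ω | V ω ∈ s} = ∑' x : Fin n → ℕ, s.indicator w x := by
    intro s
    have h1 : {ω | V ω ∈ s} = ⋃ x ∈ s, {ω | V ω = x} := by
      ext ω; simp
    have hd : s.PairwiseDisjoint (fun x => {ω | V ω = x}) := by
      intro x _ y _ hxy
      refine Set.disjoint_left.mpr fun ω h1 h2 => hxy ?_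
      exact h1.symm.trans h2
    rw [h1, measure_biUnion (Set.to_countable s) hd (fun x _ => hfiber_meas x)]
    rw [← tsum_subtype s w]
    exact tsum_congr fun x => hfiber x
  -- identify events
  have hmatch : ∀ ω, ∀ m ≤ n,
      (∑ i ∈ Finset.range m, (ξ i ω : ℤ)) - m = dwS n (V ω) m := by
    intro ω m hm
    simp only [dwS]
    congr 1
    refine Finset.sum_congr rfl fun i hi => ?_
    have hi' : i < n := lt_of_lt_of_le (Finset.mem_range.mp hi) hm
    simp only [hV]
    congr 1
    simp [Fin.val_natCast, Nat.mod_eq_of_lt hi']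
  have hEventA : {ω | sInf {m : ℕ | (∑ i ∈ Finset.range m, (ξ i ω : ℤ)) - m = -1} = n}
      = {ω | V ω ∈ dwA n} := by
    ext ω
    simp only [Set.mem_setOf_eq, dwA]
    constructor
    · intro h
      have hne : {m : ℕ | (∑ i ∈ Finset.range m, (ξ i ω : ℤ)) - m = -1}.Nonempty := by
        by_contra h'
        rw [Set.not_nonempty_iff_eq_empty] at h'
        rw [h', Nat.sInf_empty] at h
        omega
      have hmem : n ∈ {m : ℕ | (∑ i ∈ Finset.range m, (ξ i ω : ℤ)) - m = -1} :=
        h ▸ Nat.sInf_mem hne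
      refine ⟨(hmatch ω n le_rfl) ▸ hmem, fun m hm => ?_⟩
      have := Nat.notMem_of_lt_sInf (h ▸ hm :
        m < sInf {m : ℕ | (∑ i ∈ Finset.range m, (ξ i ω : ℤ)) - m = -1})
      rw [Set.mem_setOf_eq, hmatch ω m (le_of_lt hm)] at this
      exact this
    · rintro ⟨h1, h2⟩
      have hmem : n ∈ {m : ℕ | (∑ i ∈ Finset.range m, (ξ i ω : ℤ)) - m = -1} := by
        rw [Set.mem_setOf_eq, hmatch ω n le_rfl]; exact h1
      refine le_antisymm (Nat.sInf_le hmem) ?_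
      by_contra h'
      push_neg at h'
      have hlt : sInf {m : ℕ | (∑ i ∈ Finset.range m, (ξ i ω : ℤ)) - m = -1} < n := h'
      have hsmem := Nat.sInf_mem ⟨n, hmem⟩
      rw [Set.mem_setOf_eq,
        hmatch ω _ (le_of_lt hlt)] at hsmem
      exact h2 _ hlt hsmem
  have hEventB : {ω | (∑ i ∈ Finset.range n, ξ i ω) = n - 1}
      = {ω | V ω ∈ ({y | dwS n y n = -1} : Set (Fin n → ℕ))} := by
    ext ω
    simp only [Set.mem_setOf_eq]
    have h1 := hmatch ω n le_rfl
    have h2 : ((∑ i ∈ Finset.range n, ξ i ω : ℕ) : ℤ) = ∑ i ∈ Finset.range n, (ξ i ω : ℤ) := by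
      push_cast
      rfl
    constructor
    · intro h
      rw [← h1, ← h2]
      omega
    · intro h
      rw [← h1, ← h2] at h
      omega
  -- rotation invariance of the weight
  have hwrot : ∀ (k : Fin n) (x : Fin n → ℕ), w (fun i => x (i + k)) = w x := by
    intro k x
    exact Equiv.prod_comp (Equiv.addRight k) (fun i => p (x i))
  -- the key identity
  have key : (∑' x : Fin n → ℕ, ({y | dwS n y n = -1} : Set (Fin n → ℕ)).indicator w x)
      = (n : ENNReal) * ∑' x : Fin n → ℕ, (dwA n).indicator w x := by
    calc (∑' x : Fin n → ℕ, ({y | dwS n y n = -1} : Set (Fin n → ℕ)).indicator w x)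
        = ∑' x : Fin n → ℕ, ∑ k : Fin n, (dwA n).indicator w (fun i => x (i + k)) :=
          tsum_congr fun x => dwass_count n w hwrot x
      _ = ∑ k : Fin n, ∑' x : Fin n → ℕ, (dwA n).indicator w (fun i => x (i + k)) :=
          Summable.tsum_finsetSum fun k _ => ENNReal.summable
      _ = ∑ k : Fin n, ∑' x : Fin n → ℕ, (dwA n).indicator w x := by
          refine Finset.sum_congr rfl fun k _ => ?_
          rw [← Equiv.tsum_eq (Equiv.arrowCongr (Equiv.addRight k).symm (Equiv.refl ℕ))
            ((dwA n).indicator w)]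
          refine tsum_congr fun x => ?_
          congr 1
      _ = (n : ENNReal) * ∑' x : Fin n → ℕ, (dwA n).indicator w x := by
          rw [Finset.sum_const, Finset.card_univ, Fintype.card_fin, nsmul_eq_mul]
  rw [hEventA, hEventB, hPset, hPset, key, ← mul_assoc,
    ENNReal.inv_mul_cancel (by exact_mod_cast hn0.ne') (ENNReal.natCast_ne_top n), one_mul]
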